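/- Let K be a field of characteristic zero with distinguished elements ε₁, ε₂ ≠ 0, μ, and let b ≥ 2. Let (S_{0,p})_{p≥1} be constants in K with W₀(x) = −(2μ/ε₂) x^{−1} − Σ_{p≥1} p S_{0,p} x^{−p−1}, and for 1 ≤ a ≤ b let (S_{a,p}(t))_{p≥0} ⊆ K[[t]] with S_a(x,t) = Σ_{p≥0} S_{a,p}(t) x^{−p}, ∂ₓS_a = −Σ_p p S_{a,p} x^{−p−1}, ∂ₓ²S_a = Σ_p p(p+1) S_{a,p} x^{−p−2}, and with ∂ₓS₀ := W₀. Suppose that, as an identity of formal series in x^{−1} with coefficients in K[[t]], (1−tx)² [ε₂² ∂ₓ²S_b + ε₂² Σ_{a=0}^{b} (∂ₓS_a)(∂ₓS_{b−a}) + 2ε₂ x ∂ₓS_b] − 2ε₂ t ∂ₓS_{b−1} + b ε₁ε₂ t²(2−tx) S_b + ε₁ε₂ t³(1−tx) ∂_t S_b = 0. Then, with Θ_t = t·d/dt and the convention S_{a,p} = 0 for p ≤ −1, for every p ≥ 0: 2(p+2)t² S_{b,p+2} − 4(p+1)t S_{b,p+1} + ε₁ t³ (Θ_t+b) S_{b,p+1}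 − ε₁ t² (Θ_t+2b) S_{b,p} − p(p+1)ε₂ t² S_{b,p} − 4pμ t² S_{b,p} + 2p S_{b,p} + 2(p−1)p ε₂ t S_{b,p−1} + 8(p−1)μ t S_{b,p−1} − (p−2)(p−1)ε₂ S_{b,p−2} − 4(p−2)μ S_{b,p−2} − 2(p−1)t S_{b−1,p−1} − ε₂ t² Σ_{a=0}^{b} Σ_{q=1}^{p−1} q(p−q) S_{a,q} S_{b−a,p−q} + 2ε₂ t Σ_{a=0}^{b} Σ_{q=2}^{p−1} (q−1)(p−q) S_{a,q−1} S_{b−a,p−q} − ε₂ Σ_{a=0}^{b} Σ_{q=3}^{p−1} (q−2)(p−q) S_{a,q−2} S_{b−a,p−q} = 0. -/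

import Mathlib

open PowerSeries

set_option maxHeartbeats 1600000

/-- The operator `Θ_t = t · d/dt` on formal power series in `t`. -/
noncomputable def thetaT (K : Type*) [CommRing K] (f : PowerSeries K) : PowerSeries K :=
  PowerSeries.X * PowerSeries.derivativeFun f

/-- The coefficients `S_{a,j}` with the convention `S_{a,j} = 0` for `j ≤ −1`, where
`S_{0,j}` are the constants `S0 j ∈ K` and `S_{a,j} = S a j ∈ K[[t]]` for `a ≥ 1`. -/
noncomputable def coeffS {K : Type*} [Field K] (S0 : ℕ → K)
    (S : ℕ → ℕ → PowerSeries K) (a : ℕ) (j : ℤ) : PowerSeries K :=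
  if j < 0 then 0
  else if a = 0 then PowerSeries.C (S0 j.toNat) else S a j.toNat

/-- **The hierarchy of equations for the multi-backbone phase functions**
(Corollary 3.4 of the paper).  The phase functions are formal series in `x⁻¹` with
coefficients in `K[[t]]`, realised as formal Laurent series over `K[[t]]` in the
variable `X = x⁻¹` (so multiplication by `x` is multiplication by
`HahnSeries.single (−1) 1`), with `∂ₓS₀ := W₀`.  If the order-`s^b` equation of the
quantum-curve hierarchy (cleared of denominators by `(1−tx)²`) holds, then the
coefficients `S_{b,p}(t)` satisfy the stated recursion for every `p ≥ 0`, with the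
convention `S_{a,p} = 0` for `p ≤ −1`. -/
theorem multi_backbone_phase_hierarchy (K : Type*) [Field K] [CharZero K]
    (ε₁ ε₂ μ : K) (hε₁ : ε₁ ≠ 0) (hε₂ : ε₂ ≠ 0) (b : ℕ) (hb : 2 ≤ b)
    (S0 : ℕ → K) (S : ℕ → ℕ → PowerSeries K)
    (x t W₀ SbL DxxSb DtSb : LaurentSeries (PowerSeries K))
    (Dx : ℕ → LaurentSeries (PowerSeries K))
    (hx : x = HahnSeries.single (-1 : ℤ) 1)
    (ht : t = HahnSeries.C (PowerSeries.X : PowerSeries K))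
    (hW₀ : W₀ = HahnSeries.ofPowerSeries ℤ (PowerSeries K) (PowerSeries.mk fun n =>
      if n = 0 then 0
      else if n = 1 then PowerSeries.C (-(2 * μ / ε₂))
      else PowerSeries.C (-(((n - 1 : ℕ) : K) * S0 (n - 1)))))
    (hDx0 : Dx 0 = W₀)
    (hDx : ∀ a : ℕ, 1 ≤ a →
      Dx a = HahnSeries.ofPowerSeries ℤ (PowerSeries K) (PowerSeries.mk fun n =>
        if n = 0 then 0 else -(PowerSeries.C (((n - 1 : ℕ) : K))) * S a (n - 1)))
    (hSbL : SbL = HahnSeries.ofPowerSeries ℤ (PowerSeries K)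
      (PowerSeries.mk fun p => S b p))
    (hDxxSb : DxxSb = HahnSeries.ofPowerSeries ℤ (PowerSeries K) (PowerSeries.mk fun n =>
      if n ≤ 1 then 0
      else PowerSeries.C (((n - 2 : ℕ) : K) * ((n - 1 : ℕ) : K)) * S b (n - 2)))
    (hDtSb : DtSb = HahnSeries.ofPowerSeries ℤ (PowerSeries K)
      (PowerSeries.mk fun p => PowerSeries.derivativeFun (S b p)))
    (heq : (1 - t * x) ^ 2 *
          (HahnSeries.C (PowerSeries.C (ε₂ ^ 2)) * DxxSb
            + HahnSeries.C (PowerSeries.C (ε₂ ^ 2)) *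
                ∑ a ∈ Finset.range (b + 1), Dx a * Dx (b - a)
            + HahnSeries.C (PowerSeries.C (2 * ε₂)) * x * Dx b)
        - HahnSeries.C (PowerSeries.C (2 * ε₂)) * t * Dx (b - 1)
        + HahnSeries.C (PowerSeries.C ((b : K) * (ε₁ * ε₂))) * t ^ 2 * (2 - t * x) * SbL
        + HahnSeries.C (PowerSeries.C (ε₁ * ε₂)) * t ^ 3 * (1 - t * x) * DtSb
        = 0) :
    ∀ p : ℕ,
      PowerSeries.C (2 * ((p : K) + 2)) * PowerSeries.X ^ 2 *
          coeffS S0 S b ((p : ℤ) + 2)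
        - PowerSeries.C (4 * ((p : K) + 1)) * PowerSeries.X *
            coeffS S0 S b ((p : ℤ) + 1)
        + PowerSeries.C ε₁ * PowerSeries.X ^ 3 *
            (thetaT K (coeffS S0 S b ((p : ℤ) + 1))
              + PowerSeries.C (b : K) * coeffS S0 S b ((p : ℤ) + 1))
        - PowerSeries.C ε₁ * PowerSeries.X ^ 2 *
            (thetaT K (coeffS S0 S b (p : ℤ))
              + PowerSeries.C (2 * (b : K)) * coeffS S0 S b (p : ℤ))
        - PowerSeries.C ((p : K) * ((p : K) + 1) * ε₂) * PowerSeries.X ^ 2 *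
            coeffS S0 S b (p : ℤ)
        - PowerSeries.C (4 * (p : K) * μ) * PowerSeries.X ^ 2 * coeffS S0 S b (p : ℤ)
        + PowerSeries.C (2 * (p : K)) * coeffS S0 S b (p : ℤ)
        + PowerSeries.C (2 * ((p : K) - 1) * (p : K) * ε₂) * PowerSeries.X *
            coeffS S0 S b ((p : ℤ) - 1)
        + PowerSeries.C (8 * ((p : K) - 1) * μ) * PowerSeries.X *
            coeffS S0 S b ((p : ℤ) - 1)
        - PowerSeries.C (((p : K) - 2) * ((p : K) - 1) * ε₂) *
            coeffS S0 S b ((p : ℤ) - 2)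
        - PowerSeries.C (4 * ((p : K) - 2) * μ) * coeffS S0 S b ((p : ℤ) - 2)
        - PowerSeries.C (2 * ((p : K) - 1)) * PowerSeries.X *
            coeffS S0 S (b - 1) ((p : ℤ) - 1)
        - PowerSeries.C ε₂ * PowerSeries.X ^ 2 *
            ∑ a ∈ Finset.range (b + 1), ∑ q ∈ Finset.Icc 1 (p - 1),
              PowerSeries.C ((q : K) * ((p : K) - (q : K))) *
                coeffS S0 S a (q : ℤ) * coeffS S0 S (b - a) ((p : ℤ) - (q : ℤ))
        + PowerSeries.C (2 * ε₂) * PowerSeries.X *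
            ∑ a ∈ Finset.range (b + 1), ∑ q ∈ Finset.Icc 2 (p - 1),
              PowerSeries.C (((q : K) - 1) * ((p : K) - (q : K))) *
                coeffS S0 S a ((q : ℤ) - 1) * coeffS S0 S (b - a) ((p : ℤ) - (q : ℤ))
        - PowerSeries.C ε₂ *
            ∑ a ∈ Finset.range (b + 1), ∑ q ∈ Finset.Icc 3 (p - 1),
              PowerSeries.C (((q : K) - 2) * ((p : K) - (q : K))) *
                coeffS S0 S a ((q : ℤ) - 2) * coeffS S0 S (b - a) ((p : ℤ) - (q : ℤ))
        = 0 := by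
  classical
  have hb0 : b ≠ 0 := by omega
  have hb10 : b - 1 ≠ 0 := by omega
  subst hx ht hW₀ hSbL hDxxSb hDtSb
  -- basic coeffS facts
  have hcsNeg : ∀ (a : ℕ) (j : ℤ), j < 0 → coeffS S0 S a j = 0 := by
    intro a j hj; rw [coeffS, if_pos hj]
  have hcsNat : ∀ (a : ℕ), a ≠ 0 → ∀ j : ℕ, coeffS S0 S a ((j : ℕ) : ℤ) = S a j := by
    intro a ha j
    rw [coeffS, if_neg (by exact not_lt.mpr (Int.natCast_nonneg j)), if_neg ha,
      Int.toNat_natCast]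
  have hcs0Nat : ∀ j : ℕ, coeffS S0 S 0 ((j : ℕ) : ℤ) = PowerSeries.C (S0 j) := by
    intro j
    rw [coeffS, if_neg (by exact not_lt.mpr (Int.natCast_nonneg j)), if_pos rfl,
      Int.toNat_natCast]
  -- the power-series components
  set dd : PowerSeries (PowerSeries K) := PowerSeries.mk fun n =>
      if n ≤ 1 then 0
      else PowerSeries.C (((n - 2 : ℕ) : K) * ((n - 1 : ℕ) : K)) * S b (n - 2) with hdd_def
  set sb : PowerSeries (PowerSeries K) := PowerSeries.mk (fun p => S b p) with hsb_def
  set dt : PowerSeries (PowerSeries K) :=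
      PowerSeries.mk (fun p => PowerSeries.derivativeFun (S b p)) with hdt_def
  set fps : ℕ → PowerSeries (PowerSeries K) := fun a =>
      if a = 0 then
        PowerSeries.mk fun n =>
          if n = 0 then 0
          else if n = 1 then PowerSeries.C (-(2 * μ / ε₂))
          else PowerSeries.C (-(((n - 1 : ℕ) : K) * S0 (n - 1)))
      else PowerSeries.mk fun n =>
          if n = 0 then 0 else -(PowerSeries.C (((n - 1 : ℕ) : K))) * S a (n - 1)
    with hfps_def
  have hDxφ : ∀ a, Dx a = HahnSeries.ofPowerSeries ℤ (PowerSeries K) (fps a) := by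
    intro a
    rcases Nat.eq_zero_or_pos a with rfl | ha
    · rw [hDx0]; simp [hfps_def]
    · have ha' : a ≠ 0 := by omega
      rw [hDx a ha]; simp [hfps_def, ha']
  set Sig : PowerSeries (PowerSeries K) :=
      ∑ a ∈ Finset.range (b + 1), fps a * fps (b - a) with hSig_def
  have hDxsum : ∑ a ∈ Finset.range (b + 1), Dx a * Dx (b - a)
      = HahnSeries.ofPowerSeries ℤ (PowerSeries K) Sig := by
    rw [hSig_def, map_sum]
    exact Finset.sum_congr rfl fun a _ => by rw [hDxφ a, hDxφ (b - a), map_mul]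
  rw [hDxsum, hDxφ b, hDxφ (b - 1)] at heq
  -- constants
  set c1 : PowerSeries K := PowerSeries.C (ε₂ ^ 2) with hc1_def
  set c2 : PowerSeries K := PowerSeries.C (2 * ε₂) with hc2_def
  set cb : PowerSeries K := PowerSeries.C ((b : K) * (ε₁ * ε₂)) with hcb_def
  set ce : PowerSeries K := PowerSeries.C (ε₁ * ε₂) with hce_def
  set tX : PowerSeries K := PowerSeries.X with htX_def
  set Y : PowerSeries (PowerSeries K) := PowerSeries.X with hY_def
  set GG : PowerSeries (PowerSeries K) :=
    PowerSeries.C c1 * (Y ^ 3 * dd)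
      + PowerSeries.C c1 * (Y ^ 3 * Sig)
      + PowerSeries.C c2 * (Y ^ 2 * fps b)
      - PowerSeries.C (2 * tX * c1) * (Y ^ 2 * dd)
      - PowerSeries.C (2 * tX * c1) * (Y ^ 2 * Sig)
      - PowerSeries.C (2 * tX * c2) * (Y * fps b)
      + PowerSeries.C (tX ^ 2 * c1) * (Y * dd)
      + PowerSeries.C (tX ^ 2 * c1) * (Y * Sig)
      + PowerSeries.C (tX ^ 2 * c2) * fps b
      - PowerSeries.C (tX * c2) * (Y ^ 3 * fps (b - 1))
      + PowerSeries.C (2 * tX ^ 2 * cb) * (Y ^ 3 * sb)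
      - PowerSeries.C (tX ^ 3 * cb) * (Y ^ 2 * sb)
      + PowerSeries.C (tX ^ 3 * ce) * (Y ^ 3 * dt)
      - PowerSeries.C (tX ^ 4 * ce) * (Y ^ 2 * dt) with hGG_def
  have hvx : HahnSeries.single (1 : ℤ) (1 : PowerSeries K)
      * HahnSeries.single (-1 : ℤ) (1 : PowerSeries K) = 1 := by
    rw [HahnSeries.single_mul_single, mul_one]; norm_num
  have hGG0 : GG = 0 := by
    apply HahnSeries.ofPowerSeries_injective (Γ := ℤ) (R := PowerSeries K)
    rw [map_zero]
    have h0 := mul_eq_zero_of_right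
      ((HahnSeries.single (1 : ℤ) (1 : PowerSeries K)) ^ 3) heq
    rw [← h0]
    simp only [hGG_def, hY_def, map_add, map_sub, map_mul, map_pow, map_ofNat,
      HahnSeries.ofPowerSeries_X, HahnSeries.ofPowerSeries_C]
    linear_combination (-(((HahnSeries.C tX) ^ 2 *
        (HahnSeries.single (1:ℤ) (1:PowerSeries K) * HahnSeries.single (-1:ℤ) (1:PowerSeries K) + 1)
        - 2 * HahnSeries.C tX * HahnSeries.single (1:ℤ) (1:PowerSeries K)) *
        (HahnSeries.single (1:ℤ) (1:PowerSeries K) *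
          (HahnSeries.C c1 * HahnSeries.ofPowerSeries ℤ (PowerSeries K) dd
            + HahnSeries.C c1 * HahnSeries.ofPowerSeries ℤ (PowerSeries K) Sig))
      + HahnSeries.C c2 * HahnSeries.ofPowerSeries ℤ (PowerSeries K) (fps b) *
        ((HahnSeries.single (1:ℤ) (1:PowerSeries K)) ^ 2
          - 2 * HahnSeries.C tX * HahnSeries.single (1:ℤ) (1:PowerSeries K) *
            (HahnSeries.single (1:ℤ) (1:PowerSeries K) * HahnSeries.single (-1:ℤ) (1:PowerSeries K) + 1)
          + (HahnSeries.C tX) ^ 2 *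
            ((HahnSeries.single (1:ℤ) (1:PowerSeries K) * HahnSeries.single (-1:ℤ) (1:PowerSeries K)) ^ 2
              + HahnSeries.single (1:ℤ) (1:PowerSeries K) * HahnSeries.single (-1:ℤ) (1:PowerSeries K) + 1))
      - HahnSeries.C cb * (HahnSeries.C tX) ^ 3 * HahnSeries.ofPowerSeries ℤ (PowerSeries K) sb *
          (HahnSeries.single (1:ℤ) (1:PowerSeries K)) ^ 2
      - HahnSeries.C ce * (HahnSeries.C tX) ^ 4 * HahnSeries.ofPowerSeries ℤ (PowerSeries K) dt *
          (HahnSeries.single (1:ℤ) (1:PowerSeries K)) ^ 2)) * hvx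

  -- coefficients of fps
  have hfc : ∀ (a i : ℕ), PowerSeries.coeff i (fps a)
      = -(PowerSeries.C ((i : K) - 1)) * coeffS S0 S a ((i : ℤ) - 1)
        + (if a = 0 ∧ i = 1 then PowerSeries.C (-(2 * μ / ε₂)) else 0) := by
    intro a i
    by_cases ha : a = 0
    · subst ha
      simp only [hfps_def, eq_self_iff_true, if_true, PowerSeries.coeff_mk, true_and]
      by_cases h0 : i = 0
      · subst h0
        rw [if_pos rfl, hcsNeg 0 _ (by norm_num)]
        norm_num
      by_cases h1 : i = 1
      · subst h1
        rw [if_neg (by norm_num), if_pos rfl, if_pos rfl]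
        norm_num
      · rw [if_neg h0, if_neg h1, if_neg h1]
        have e1 : (i : ℤ) - 1 = ((i - 1 : ℕ) : ℤ) := by omega
        rw [e1, hcs0Nat, add_zero, neg_mul, ← map_mul, ← map_neg]
        congr 1
        rw [Nat.cast_sub (by omega : 1 ≤ i), Nat.cast_one]
    · have hcond : ¬(a = 0 ∧ i = 1) := fun h => ha h.1
      simp only [hfps_def, if_neg ha, PowerSeries.coeff_mk, if_neg hcond, add_zero]
      by_cases h0 : i = 0
      · subst h0
        rw [hcsNeg a _ (by norm_num)]
        simp
      · rw [if_neg h0]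
        have e1 : (i : ℤ) - 1 = ((i - 1 : ℕ) : ℤ) := by omega
        rw [e1, hcsNat a ha]
        have e2 : ((i - 1 : ℕ) : K) = (i : K) - 1 := by
          rw [Nat.cast_sub (by omega : 1 ≤ i), Nat.cast_one]
        rw [e2]
  have hBBsmall : ∀ (a' j : ℕ), j ≤ 1 →
      -(PowerSeries.C ((j : K) - 1)) * coeffS S0 S a' ((j : ℤ) - 1) = 0 := by
    intro a' j hj
    interval_cases j
    · rw [hcsNeg a' _ (by norm_num)]; ring
    · norm_num
  -- the key convolution identity
  have key : ∀ m : ℕ, PowerSeries.coeff m Sig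
      = (∑ a ∈ Finset.range (b + 1), ∑ i ∈ Finset.Icc 2 (m - 2),
          PowerSeries.C (((i : K) - 1) * ((m : K) - (i : K) - 1))
            * coeffS S0 S a ((i : ℤ) - 1) * coeffS S0 S (b - a) ((m : ℤ) - (i : ℤ) - 1))
        + PowerSeries.C (-(2 * μ / ε₂))
            * (-(PowerSeries.C ((m : K) - 2)) * coeffS S0 S b ((m : ℤ) - 2)) * 2 := by
    intro m
    have hterm : ∀ a ∈ Finset.range (b + 1),
        PowerSeries.coeff m (fps a * fps (b - a))
        = (∑ i ∈ Finset.Icc 2 (m - 2),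
            PowerSeries.C (((i : K) - 1) * ((m : K) - (i : K) - 1))
              * coeffS S0 S a ((i : ℤ) - 1) * coeffS S0 S (b - a) ((m : ℤ) - (i : ℤ) - 1))
          + ((if a = 0 then PowerSeries.C (-(2 * μ / ε₂))
                * (-(PowerSeries.C ((m : K) - 2)) * coeffS S0 S b ((m : ℤ) - 2)) else 0)
            + (if a = b then PowerSeries.C (-(2 * μ / ε₂))
                * (-(PowerSeries.C ((m : K) - 2)) * coeffS S0 S b ((m : ℤ) - 2)) else 0)) := by
      intro a ha
      have hab : a ≤ b := by
        have := Finset.mem_range.mp ha; omega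
      rw [PowerSeries.coeff_mul, Finset.Nat.sum_antidiagonal_eq_sum_range_succ_mk]
      have expand : ∀ i ∈ Finset.range (m + 1),
          PowerSeries.coeff i (fps a)
            * PowerSeries.coeff (m - i) (fps (b - a))
          = (-(PowerSeries.C ((i : K) - 1)) * coeffS S0 S a ((i : ℤ) - 1))
              * (-(PowerSeries.C (((m - i : ℕ) : K) - 1))
                  * coeffS S0 S (b - a) (((m - i : ℕ) : ℤ) - 1))
            + ((if a = 0 ∧ i = 1 then PowerSeries.C (-(2 * μ / ε₂)) else 0)
                * (-(PowerSeries.C (((m - i : ℕ) : K) - 1))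
                    * coeffS S0 S (b - a) (((m - i : ℕ) : ℤ) - 1))
              + ((-(PowerSeries.C ((i : K) - 1)) * coeffS S0 S a ((i : ℤ) - 1))
                  * (if b - a = 0 ∧ m - i = 1 then PowerSeries.C (-(2 * μ / ε₂)) else 0)
                + (if a = 0 ∧ i = 1 then PowerSeries.C (-(2 * μ / ε₂)) else 0)
                  * (if b - a = 0 ∧ m - i = 1 then PowerSeries.C (-(2 * μ / ε₂)) else 0))) := by
        intro i _
        rw [hfc, hfc]; ring
      rw [Finset.sum_congr rfl expand, Finset.sum_add_distrib, Finset.sum_add_distrib,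
        Finset.sum_add_distrib]
      have pA : (∑ i ∈ Finset.range (m + 1),
          (-(PowerSeries.C ((i : K) - 1)) * coeffS S0 S a ((i : ℤ) - 1))
            * (-(PowerSeries.C (((m - i : ℕ) : K) - 1))
                * coeffS S0 S (b - a) (((m - i : ℕ) : ℤ) - 1)))
          = ∑ i ∈ Finset.Icc 2 (m - 2),
            PowerSeries.C (((i : K) - 1) * ((m : K) - (i : K) - 1))
              * coeffS S0 S a ((i : ℤ) - 1) * coeffS S0 S (b - a) ((m : ℤ) - (i : ℤ) - 1) := by
        rw [← Finset.sum_subset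
          (show Finset.Icc 2 (m - 2) ⊆ Finset.range (m + 1) by
            intro i hi; rw [Finset.mem_Icc] at hi; rw [Finset.mem_range]; omega)
          (by
            intro i hi hni
            rw [Finset.mem_range] at hi
            rw [Finset.mem_Icc] at hni
            rcases (by omega : i ≤ 1 ∨ m - i ≤ 1) with h | h
            · rw [hBBsmall a i h, zero_mul]
            · rw [hBBsmall (b - a) (m - i) h, mul_zero])]
        refine Finset.sum_congr rfl fun i hi => ?_
        rw [Finset.mem_Icc] at hi
        have him : i ≤ m := by omega
        have e1 : ((m - i : ℕ) : K) - 1 = (m : K) - (i : K) - 1 := by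
          rw [Nat.cast_sub him]
        have e2 : ((m - i : ℕ) : ℤ) - 1 = (m : ℤ) - (i : ℤ) - 1 := by omega
        rw [e1, e2]
        simp only [map_mul]
        ring
      have pB : (∑ i ∈ Finset.range (m + 1),
          (if a = 0 ∧ i = 1 then PowerSeries.C (-(2 * μ / ε₂)) else 0)
            * (-(PowerSeries.C (((m - i : ℕ) : K) - 1))
                * coeffS S0 S (b - a) (((m - i : ℕ) : ℤ) - 1)))
          = (if a = 0 then PowerSeries.C (-(2 * μ / ε₂))
              * (-(PowerSeries.C ((m : K) - 2)) * coeffS S0 S b ((m : ℤ) - 2)) else 0) := by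
        by_cases ha0 : a = 0
        · subst ha0
          rw [if_pos rfl]
          rcases m with _ | m'
          · rw [hcsNeg b _ (by norm_num)]
            simp
          · rw [Finset.sum_eq_single 1]
            · rw [if_pos ⟨rfl, rfl⟩]
              rw [show m' + 1 - 1 = m' by omega, Nat.sub_zero]
              rw [show ((m' : ℕ) : K) - 1 = ((m' + 1 : ℕ) : K) - 2 from by push_cast; ring,
                show ((m' : ℕ) : ℤ) - 1 = ((m' + 1 : ℕ) : ℤ) - 2 by omega]
            · intro i hi hne
              rw [if_neg (by exact fun h => hne h.2), zero_mul]
            · intro h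
              exact absurd (Finset.mem_range.mpr (by omega)) h
        · rw [if_neg ha0]
          apply Finset.sum_eq_zero
          intro i _
          rw [if_neg (by exact fun h => ha0 h.1), zero_mul]
      have pC : (∑ i ∈ Finset.range (m + 1),
          (-(PowerSeries.C ((i : K) - 1)) * coeffS S0 S a ((i : ℤ) - 1))
            * (if b - a = 0 ∧ m - i = 1 then PowerSeries.C (-(2 * μ / ε₂)) else 0))
          = (if a = b then PowerSeries.C (-(2 * μ / ε₂))
              * (-(PowerSeries.C ((m : K) - 2)) * coeffS S0 S b ((m : ℤ) - 2)) else 0) := by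
        by_cases hb' : a = b
        · subst hb'
          rw [if_pos rfl]
          rcases m with _ | m'
          · rw [hcsNeg a _ (by norm_num)]
            simp
          · rw [Finset.sum_eq_single m']
            · rw [if_pos ⟨Nat.sub_self a, by omega⟩]
              rw [show ((m' : ℕ) : K) - 1 = ((m' + 1 : ℕ) : K) - 2 from by push_cast; ring,
                show ((m' : ℕ) : ℤ) - 1 = ((m' + 1 : ℕ) : ℤ) - 2 by omega]
              ring
            · intro i hi hne
              rw [Finset.mem_range] at hi
              rw [if_neg (fun h => hne (by omega)), mul_zero]
            · intro h
              exact absurd (Finset.mem_range.mpr (by omega)) h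
        · rw [if_neg hb']
          apply Finset.sum_eq_zero
          intro i _
          rw [if_neg (fun h => hb' (by omega)), mul_zero]
      have pD : (∑ i ∈ Finset.range (m + 1),
          (if a = 0 ∧ i = 1 then PowerSeries.C (-(2 * μ / ε₂)) else 0)
            * (if b - a = 0 ∧ m - i = 1 then PowerSeries.C (-(2 * μ / ε₂)) else 0)) = 0 := by
        apply Finset.sum_eq_zero
        intro i _
        by_cases ha0 : a = 0
        · exact mul_eq_zero_of_right _ (if_neg (fun h => hb0 (by omega)))
        · exact mul_eq_zero_of_left (if_neg (fun h => ha0 h.1)) _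
      rw [pA, pB, pC, pD, add_zero]
    rw [hSig_def, map_sum, Finset.sum_congr rfl hterm, Finset.sum_add_distrib,
      Finset.sum_add_distrib, Finset.sum_ite_eq' (Finset.range (b + 1)) 0,
      Finset.sum_ite_eq' (Finset.range (b + 1)) b,
      if_pos (Finset.mem_range.mpr (by omega)), if_pos (Finset.mem_range.mpr (by omega))]
    ring
  -- dd coefficients
  have hddc : ∀ j : ℕ, PowerSeries.coeff j dd
      = PowerSeries.C (((j : K) - 2) * ((j : K) - 1)) * coeffS S0 S b ((j : ℤ) - 2) := by
    intro j
    rw [hdd_def, PowerSeries.coeff_mk]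
    by_cases hj : j ≤ 1
    · rw [if_pos hj]
      interval_cases j
      · rw [hcsNeg b _ (by norm_num)]; ring
      · rw [hcsNeg b _ (by norm_num)]; ring
    · rw [if_neg hj]
      have e1 : (j : ℤ) - 2 = ((j - 2 : ℕ) : ℤ) := by omega
      rw [e1, hcsNat b hb0]
      rw [show ((j - 2 : ℕ) : K) = (j : K) - 2 from by
          rw [Nat.cast_sub (by omega)]; norm_num,
        show ((j - 1 : ℕ) : K) = (j : K) - 1 from by
          rw [Nat.cast_sub (by omega)]; norm_num]
  intro p
  have hc := congrArg (PowerSeries.coeff (p + 3)) hGG0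
  rw [map_zero] at hc
  have hY3 : ∀ g : PowerSeries (PowerSeries K),
      PowerSeries.coeff (p + 3) (Y ^ 3 * g)
        = PowerSeries.coeff p g := fun g => by
    rw [hY_def]; exact PowerSeries.coeff_X_pow_mul g 3 p
  have hY2 : ∀ g : PowerSeries (PowerSeries K),
      PowerSeries.coeff (p + 3) (Y ^ 2 * g)
        = PowerSeries.coeff (p + 1) g := fun g => by
    rw [hY_def, show p + 3 = p + 1 + 2 by omega]
    exact PowerSeries.coeff_X_pow_mul g 2 (p + 1)
  have hY1 : ∀ g : PowerSeries (PowerSeries K),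
      PowerSeries.coeff (p + 3) (Y * g)
        = PowerSeries.coeff (p + 2) g := fun g => by
    have h := PowerSeries.coeff_X_pow_mul g 1 (p + 2)
    rw [pow_one] at h
    rw [hY_def, show p + 3 = p + 2 + 1 by omega]
    exact h
  simp only [hGG_def, map_add, map_sub, PowerSeries.coeff_C_mul, hY3, hY2, hY1] at hc
  -- specific coefficients
  have hfbc : ∀ j : ℕ, PowerSeries.coeff j (fps b)
      = -(PowerSeries.C ((j : K) - 1)) * coeffS S0 S b ((j : ℤ) - 1) := by
    intro j; rw [hfc b j, if_neg (fun h => hb0 h.1), add_zero]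
  have hfb_p1 : PowerSeries.coeff (p + 1) (fps b)
      = -(PowerSeries.C (p : K)) * S b p := by
    rw [hfbc (p + 1), show ((p + 1 : ℕ) : ℤ) - 1 = ((p : ℕ) : ℤ) by omega, hcsNat b hb0,
      show ((p + 1 : ℕ) : K) - 1 = (p : K) from by push_cast; ring]
  have hfb_p2 : PowerSeries.coeff (p + 2) (fps b)
      = -(PowerSeries.C ((p : K) + 1)) * S b (p + 1) := by
    rw [hfbc (p + 2), show ((p + 2 : ℕ) : ℤ) - 1 = ((p + 1 : ℕ) : ℤ) by omega, hcsNat b hb0,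
      show ((p + 2 : ℕ) : K) - 1 = (p : K) + 1 from by push_cast; ring]
  have hfb_p3 : PowerSeries.coeff (p + 3) (fps b)
      = -(PowerSeries.C ((p : K) + 2)) * S b (p + 2) := by
    rw [hfbc (p + 3), show ((p + 3 : ℕ) : ℤ) - 1 = ((p + 2 : ℕ) : ℤ) by omega, hcsNat b hb0,
      show ((p + 3 : ℕ) : K) - 1 = (p : K) + 2 from by push_cast; ring]
  have hfb1c : PowerSeries.coeff p (fps (b - 1))
      = -(PowerSeries.C ((p : K) - 1)) * coeffS S0 S (b - 1) ((p : ℤ) - 1) := by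
    rw [hfc (b - 1) p, if_neg (fun h => hb10 h.1), add_zero]
  have hdd_p1 : PowerSeries.coeff (p + 1) dd
      = PowerSeries.C (((p : K) - 1) * (p : K)) * coeffS S0 S b ((p : ℤ) - 1) := by
    rw [hddc (p + 1), show ((p + 1 : ℕ) : ℤ) - 2 = (p : ℤ) - 1 by omega,
      show ((p + 1 : ℕ) : K) - 2 = (p : K) - 1 from by push_cast; ring,
      show ((p + 1 : ℕ) : K) - 1 = (p : K) from by push_cast; ring]
  have hdd_p2 : PowerSeries.coeff (p + 2) dd
      = PowerSeries.C ((p : K) * ((p : K) + 1)) * S b p := by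
    rw [hddc (p + 2), show ((p + 2 : ℕ) : ℤ) - 2 = ((p : ℕ) : ℤ) by omega, hcsNat b hb0,
      show ((p + 2 : ℕ) : K) - 2 = (p : K) from by push_cast; ring,
      show ((p + 2 : ℕ) : K) - 1 = (p : K) + 1 from by push_cast; ring]
  have hsb_p : PowerSeries.coeff p sb = S b p := by
    rw [hsb_def, PowerSeries.coeff_mk]
  have hsb_p1 : PowerSeries.coeff (p + 1) sb = S b (p + 1) := by
    rw [hsb_def, PowerSeries.coeff_mk]
  have hdt_p : PowerSeries.coeff p dt
      = PowerSeries.derivativeFun (S b p) := by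
    rw [hdt_def, PowerSeries.coeff_mk]
  have hdt_p1 : PowerSeries.coeff (p + 1) dt
      = PowerSeries.derivativeFun (S b (p + 1)) := by
    rw [hdt_def, PowerSeries.coeff_mk]
  -- key at the three relevant indices
  have key0 : PowerSeries.coeff p Sig
      = (∑ a ∈ Finset.range (b + 1), ∑ q ∈ Finset.Icc 3 (p - 1),
          PowerSeries.C (((q : K) - 2) * ((p : K) - (q : K)))
            * coeffS S0 S a ((q : ℤ) - 2) * coeffS S0 S (b - a) ((p : ℤ) - (q : ℤ)))
        + PowerSeries.C (-(2 * μ / ε₂))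
            * (-(PowerSeries.C ((p : K) - 2)) * coeffS S0 S b ((p : ℤ) - 2)) * 2 := by
    rw [key p]
    congr 1
    apply Finset.sum_congr rfl
    intro a _
    refine Finset.sum_bij' (fun i _ => i + 1) (fun q _ => q - 1) ?_ ?_ ?_ ?_ ?_
    · intro i hi; show i + 1 ∈ Finset.Icc 3 (p - 1)
      rw [Finset.mem_Icc] at hi ⊢; omega
    · intro q hq; show q - 1 ∈ Finset.Icc 2 (p - 2)
      rw [Finset.mem_Icc] at hq ⊢; omega
    · intro i hi; show i + 1 - 1 = i; omega
    · intro q hq; rw [Finset.mem_Icc] at hq; show q - 1 + 1 = q; omega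
    · intro i hi
      rw [Finset.mem_Icc] at hi
      rw [show ((i + 1 : ℕ) : K) - 2 = (i : K) - 1 from by push_cast; ring,
        show ((i + 1 : ℕ) : ℤ) - 2 = (i : ℤ) - 1 by omega,
        show (p : K) - ((i + 1 : ℕ) : K) = (p : K) - (i : K) - 1 from by push_cast; ring,
        show (p : ℤ) - ((i + 1 : ℕ) : ℤ) = (p : ℤ) - (i : ℤ) - 1 by omega]
  have key1 : PowerSeries.coeff (p + 1) Sig
      = (∑ a ∈ Finset.range (b + 1), ∑ q ∈ Finset.Icc 2 (p - 1),
          PowerSeries.C (((q : K) - 1) * ((p : K) - (q : K)))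
            * coeffS S0 S a ((q : ℤ) - 1) * coeffS S0 S (b - a) ((p : ℤ) - (q : ℤ)))
        + PowerSeries.C (-(2 * μ / ε₂))
            * (-(PowerSeries.C ((p : K) - 1)) * coeffS S0 S b ((p : ℤ) - 1)) * 2 := by
    rw [key (p + 1), show (p + 1) - 2 = p - 1 by omega,
      show ((p + 1 : ℕ) : K) - 2 = (p : K) - 1 from by push_cast; ring,
      show ((p + 1 : ℕ) : ℤ) - 2 = (p : ℤ) - 1 by omega]
    congr 1
    apply Finset.sum_congr rfl
    intro a _
    apply Finset.sum_congr rfl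
    intro q hq
    rw [show ((p + 1 : ℕ) : K) - (q : K) - 1 = (p : K) - (q : K) from by push_cast; ring,
      show ((p + 1 : ℕ) : ℤ) - (q : ℤ) - 1 = (p : ℤ) - (q : ℤ) by omega]
  have key2 : PowerSeries.coeff (p + 2) Sig
      = (∑ a ∈ Finset.range (b + 1), ∑ q ∈ Finset.Icc 1 (p - 1),
          PowerSeries.C ((q : K) * ((p : K) - (q : K)))
            * coeffS S0 S a (q : ℤ) * coeffS S0 S (b - a) ((p : ℤ) - (q : ℤ)))
        + PowerSeries.C (-(2 * μ / ε₂))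
            * (-(PowerSeries.C (p : K)) * S b p) * 2 := by
    rw [key (p + 2), show (p + 2) - 2 = p by omega,
      show ((p + 2 : ℕ) : K) - 2 = (p : K) from by push_cast; ring,
      show ((p + 2 : ℕ) : ℤ) - 2 = ((p : ℕ) : ℤ) by omega, hcsNat b hb0]
    congr 1
    apply Finset.sum_congr rfl
    intro a _
    refine Finset.sum_bij' (fun i _ => i - 1) (fun q _ => q + 1) ?_ ?_ ?_ ?_ ?_
    · intro i hi; show i - 1 ∈ Finset.Icc 1 (p - 1)
      rw [Finset.mem_Icc] at hi ⊢; omega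
    · intro q hq; show q + 1 ∈ Finset.Icc 2 p
      rw [Finset.mem_Icc] at hq ⊢; omega
    · intro i hi; rw [Finset.mem_Icc] at hi; show i - 1 + 1 = i; omega
    · intro q hq; show q + 1 - 1 = q; omega
    · intro i hi
      rw [Finset.mem_Icc] at hi
      rw [show ((i - 1 : ℕ) : K) = (i : K) - 1 from by
          rw [Nat.cast_sub (by omega), Nat.cast_one],
        show ((i - 1 : ℕ) : ℤ) = (i : ℤ) - 1 by omega,
        show ((p + 2 : ℕ) : K) - (i : K) - 1 = (p : K) - ((i : K) - 1) from by push_cast; ring,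
        show ((p + 2 : ℕ) : ℤ) - (i : ℤ) - 1 = (p : ℤ) - ((i : ℤ) - 1) by omega]
  rw [key0, key1, key2, hddc p, hdd_p1, hdd_p2, hfb_p1, hfb_p2, hfb_p3, hfb1c,
    hsb_p, hsb_p1, hdt_p, hdt_p1] at hc
  -- final assembly
  have hμ2 : PowerSeries.C (2 * μ / ε₂) * PowerSeries.C ε₂ = 2 * PowerSeries.C μ := by
    rw [← map_mul, div_mul_cancel₀ _ hε₂, map_mul, map_ofNat]
  have hCe : (PowerSeries.C ε₂) ≠ 0 := fun h => hε₂ (by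
    have := congrArg (PowerSeries.coeff 0) h
    simpa using this)
  have cancel : ∀ z : PowerSeries K, PowerSeries.C ε₂ * z = 0 → z = 0 := by
    intro z hz
    rcases mul_eq_zero.mp hz with h | h
    · exact absurd h hCe
    · exact h
  have g0 : coeffS S0 S b ((p : ℤ)) = S b p := hcsNat b hb0 p
  have g1 : coeffS S0 S b ((p : ℤ) + 1) = S b (p + 1) := by
    rw [show (p : ℤ) + 1 = ((p + 1 : ℕ) : ℤ) by omega, hcsNat b hb0]
  have g2 : coeffS S0 S b ((p : ℤ) + 2) = S b (p + 2) := by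
    rw [show (p : ℤ) + 2 = ((p + 2 : ℕ) : ℤ) by omega, hcsNat b hb0]
  apply cancel
  simp only [thetaT, g0, g1, g2, ← htX_def]
  simp only [hc1_def, hc2_def, hcb_def, hce_def, map_mul, map_add, map_sub, map_neg,
    map_pow, map_one, map_ofNat, map_natCast] at hc ⊢
  linear_combination (-1 : PowerSeries K) * hc
    + (2 * PowerSeries.C ε₂ *
        (((p : PowerSeries K) - 2) * coeffS S0 S b ((p : ℤ) - 2)
          - 2 * tX * ((p : PowerSeries K) - 1) * coeffS S0 S b ((p : ℤ) - 1)
          + tX ^ 2 * (p : PowerSeries K) * S b p)) * hμ2
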